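/- Let G be a d-bounded degree graph with all degrees odd such that M = ∑_{r=0}^∞ ((d+1)/(d-1))^{-r} n_r(G,i) < ∞. Then in synchronous majority dynamics, for every vertex i, the number of times t for which A^i_{t+1} ≠ A^i_{t−1} is at most ((d+1)/(d-1)) · d · M. -/

import Mathlib

open Finset


open SimpleGraph in
lemma aux_ball_finite {V : Type*} (G : SimpleGraph V) [∀ v : V, Fintype (G.neighborSet v)]
    (hconn : G.Connected) (i : V) : ∀ n : ℕ, {j | G.dist i j ≤ n}.Finite := by
  intro n
  induction n with
  | zero =>
    apply Set.Finite.subset (Set.finite_singleton i)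
    intro j hj
    simp only [Set.mem_setOf_eq, Nat.le_zero] at hj
    simp [Set.mem_singleton_iff, ((hconn i j).dist_eq_zero_iff).mp hj |>.symm]
  | succ n ih =>
    have : {j | G.dist i j ≤ n + 1} ⊆
        {j | G.dist i j ≤ n} ∪ ⋃ v ∈ {j | G.dist i j ≤ n}, (G.neighborSet v : Set V) := by
      intro j hj
      simp only [Set.mem_setOf_eq] at hj
      rcases Nat.lt_or_ge (G.dist i j) (n+1) with h | h
      · exact Or.inl (Nat.lt_succ_iff.mp h)
      · have hdj : G.dist i j = n + 1 := le_antisymm hj h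
        obtain ⟨w, hw⟩ := (hconn i j).exists_walk_length_eq_dist
        right
        -- penultimate vertex
        have hlen : w.length = n + 1 := by rw [hw, hdj]
        obtain ⟨v, hvadj, hvd⟩ : ∃ v, G.Adj v j ∧ G.dist i v ≤ n := by
          have := w.reverse
          rcases hr : w.reverse with _ | ⟨hadj, p⟩
          · exfalso
            have : w.reverse.length = n + 1 := by rw [SimpleGraph.Walk.length_reverse, hlen]
            rw [hr] at this; simp at this
          · refine ⟨_, hadj.symm, ?_⟩
            have hpl : p.length = n := by
              have : w.reverse.length = n + 1 := by rw [SimpleGraph.Walk.length_reverse, hlen]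
              rw [hr] at this; simpa using this
            have := SimpleGraph.dist_le p.reverse
            rw [SimpleGraph.Walk.length_reverse, hpl] at this
            exact this
        exact Set.mem_biUnion hvd hvadj
    apply Set.Finite.subset _ this
    exact ih.union (ih.biUnion (fun v _ => (G.neighborSet v).toFinite))


lemma aux_hasSum_vertex {V : Type*} (G : SimpleGraph V) (i : V)
    (hfin : ∀ n : ℕ, {j | G.dist i j = n}.Finite)
    (q : ℝ) (hq0 : 0 ≤ q) (M : ℝ)
    (hM : HasSum (fun r : ℕ => q ^ r * ({j | G.dist i j = r}.ncard : ℝ)) M) :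
    HasSum (fun v : V => q ^ G.dist i v) M := by
  classical
  haveI : ∀ n : ℕ, Fintype {x // G.dist i x = n} := fun n => (hfin n).fintype
  set e := Equiv.sigmaFiberEquiv (G.dist i) with he
  rw [← e.hasSum_iff]
  have key : ∀ n : ℕ, (fun x : {x // G.dist i x = n} =>
      ((fun v : V => q ^ G.dist i v) ∘ e) ⟨n, x⟩) = fun _ => q ^ n := by
    intro n; funext x; simp [he, Equiv.sigmaFiberEquiv, x.2]
  have hfiber : ∀ n : ℕ, HasSum (fun x : {x // G.dist i x = n} =>
      ((fun v : V => q ^ G.dist i v) ∘ e) ⟨n, x⟩)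
      (q ^ n * ({j | G.dist i j = n}.ncard : ℝ)) := by
    intro n
    rw [key n]
    have h0 := hasSum_fintype (fun _ : {x // G.dist i x = n} => q ^ n)
    rw [Finset.sum_const, Finset.card_univ] at h0
    have hcard : (Fintype.card {x // G.dist i x = n} : ℝ)
        = ({j | G.dist i j = n}.ncard : ℝ) := by
      norm_cast
      rw [← Nat.card_eq_fintype_card]
      exact (Nat.card_coe_set_eq _)
    have h2 : (Fintype.card {x // G.dist i x = n}) • (q ^ n)
        = q ^ n * ({j | G.dist i j = n}.ncard : ℝ) := by
      rw [nsmul_eq_mul, hcard, mul_comm]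
    rwa [h2] at h0
  refine HasSum.sigma_of_hasSum hM hfiber ?_
  -- summability on the sigma type
  apply (summable_sigma_of_nonneg ?_).mpr
  · exact ⟨fun n => (hfiber n).summable, by
      apply hM.summable.congr
      intro n
      exact ((hfiber n).tsum_eq).symm⟩
  · rintro ⟨n, x⟩
    simp only [Function.comp_apply]
    exact pow_nonneg hq0 _


open Finset

lemma aux_fiber {V : Type*} [DecidableEq V] (G : SimpleGraph V)
    [∀ v : V, Fintype (G.neighborSet v)]
    (hconn : G.Connected) (d : ℕ) (hd : 3 ≤ d)
    (hodd : ∀ v, Odd (G.degree v)) (hdeg : ∀ v, G.degree v ≤ d) (i : V)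
    (A : ℕ → V → ℤ) (hA : ∀ t v, A t v = 1 ∨ A t v = -1)
    (hdyn : ∀ t v, A (t + 1) v = if 0 < ∑ j ∈ G.neighborFinset v, A t j then 1 else -1)
    (t : ℕ) (v : V) :
    (∑ j ∈ G.neighborFinset v, (((d:ℝ)-1)/((d:ℝ)+1)) ^ max (G.dist i v) (G.dist i j)
        * (if A (t+2) v ≠ A (t+1) j then (1:ℝ) else 0))
      + (if v = i then (((d:ℝ)-1)/((d:ℝ)+1)) * (if A (t+2) i ≠ A t i then (1:ℝ) else 0) else 0)
    ≤ ∑ j ∈ G.neighborFinset v, (((d:ℝ)-1)/((d:ℝ)+1)) ^ max (G.dist i v) (G.dist i j)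
        * (if A (t+1) j ≠ A t v then (1:ℝ) else 0) := by
  classical
  have hd3 : (3:ℝ) ≤ (d:ℝ) := by exact_mod_cast hd
  set q : ℝ := ((d:ℝ)-1)/((d:ℝ)+1) with hqdef
  have hq0 : 0 < q := by apply div_pos <;> linarith
  have hq1 : q < 1 := by rw [hqdef, div_lt_one] <;> linarith
  by_cases hos : A (t+2) v = A t v
  · -- no flip at v: both sides equal
    have hcor : (if v = i then q * (if A (t+2) i ≠ A t i then (1:ℝ) else 0) else 0) = 0 := by
      by_cases hvi : v = i
      · subst hvi; simp [hos]
      · simp [hvi]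
    rw [hcor, add_zero]
    apply le_of_eq
    apply Finset.sum_congr rfl
    intro j _
    congr 1
    rw [hos]
    by_cases h : A (t+1) j = A t v
    · simp [h]
    · simp [h, Ne.symm h]
  · -- flip at v
    have hs : A (t+2) v = if 0 < ∑ j ∈ G.neighborFinset v, A (t+1) j then 1 else -1 :=
      hdyn (t+1) v
    set s := A (t+2) v with hsdef
    set S := (G.neighborFinset v).filter (fun j => ¬ (A (t+1) j = s)) with hSdef
    set Sc := (G.neighborFinset v).filter (fun j => A (t+1) j = s) with hScdef
    have hcards : Sc.card + S.card = G.degree v := by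
      rw [hScdef, hSdef, ← SimpleGraph.card_neighborFinset_eq_degree]
      exact Finset.card_filter_add_card_filter_not _
    have hsum : ∑ j ∈ G.neighborFinset v, A (t+1) j = s * ((Sc.card : ℤ) - (S.card : ℤ)) := by
      rw [← Finset.sum_filter_add_sum_filter_not (G.neighborFinset v)
        (fun j => A (t+1) j = s), ← hScdef, ← hSdef]
      have h1 : ∑ j ∈ Sc, A (t+1) j = (Sc.card : ℤ) * s := by
        rw [Finset.sum_congr rfl (fun j hj => (Finset.mem_filter.mp hj).2),
          Finset.sum_const, nsmul_eq_mul]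
      have h2 : ∑ j ∈ S, A (t+1) j = -((S.card : ℤ) * s) := by
        have hc : ∀ j ∈ S, A (t+1) j = -s := by
          intro j hj
          have hne := (Finset.mem_filter.mp hj).2
          rcases hA (t+1) j with h | h <;> rcases hA (t+2) v with h' | h' <;>
            rw [← hsdef] at h' <;> omega
        rw [Finset.sum_congr rfl hc, Finset.sum_const, smul_neg, nsmul_eq_mul]
      rw [h1, h2]; ring
    have hlt : S.card < Sc.card := by
      rcases hA (t+2) v with h1 | h1 <;> rw [← hsdef] at h1
      · have hpos : 0 < ∑ j ∈ G.neighborFinset v, A (t+1) j := by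
          by_contra hneg
          rw [if_neg hneg] at hs
          omega
        rw [hsum, h1, one_mul, sub_pos] at hpos
        exact_mod_cast hpos
      · have hneg : ¬ (0 < ∑ j ∈ G.neighborFinset v, A (t+1) j) := by
          intro hpos
          rw [if_pos hpos] at hs
          omega
        rw [hsum, h1] at hneg
        have hle : (S.card : ℤ) ≤ (Sc.card : ℤ) := by
          by_contra hc
          push_neg at hc
          exact hneg (by nlinarith)
        have hne : S.card ≠ Sc.card := by
          intro hEq
          have hov := hodd v
          rw [← hcards, hEq] at hov
          obtain ⟨k, hk⟩ := hov
          omega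
        omega
    have hSd : 2 * S.card + 1 ≤ d := by
      have := hdeg v
      omega
    -- convert sums to sums over S and Sc
    have hL : ∑ j ∈ G.neighborFinset v, q ^ max (G.dist i v) (G.dist i j)
        * (if s ≠ A (t+1) j then (1:ℝ) else 0)
        = ∑ j ∈ S, q ^ max (G.dist i v) (G.dist i j) := by
      rw [hSdef, Finset.sum_filter]
      apply Finset.sum_congr rfl
      intro j _
      by_cases h : A (t+1) j = s
      · rw [if_neg (fun hx => hx h.symm), mul_zero, if_neg (not_not_intro h)]
      · rw [if_pos (fun hx => h hx.symm), mul_one, if_pos h]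
    have hR : ∑ j ∈ G.neighborFinset v, q ^ max (G.dist i v) (G.dist i j)
        * (if A (t+1) j ≠ A t v then (1:ℝ) else 0)
        = ∑ j ∈ Sc, q ^ max (G.dist i v) (G.dist i j) := by
      rw [hScdef, Finset.sum_filter]
      apply Finset.sum_congr rfl
      intro j _
      have hcond : (A (t+1) j ≠ A t v) ↔ (A (t+1) j = s) := by
        rcases hA (t+1) j with h | h <;> rcases hA (t+2) v with h' | h' <;>
          rcases hA t v with h'' | h'' <;> rw [← hsdef] at h' <;>
          constructor <;> intro hx <;> omega
      by_cases h : A (t+1) j = s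
      · rw [if_pos (hcond.mpr h), mul_one, if_pos h]
      · rw [if_neg (fun hx => h (hcond.mp hx)), mul_zero, if_neg h]
    rw [hL, hR]
    by_cases hvi : v = i
    · subst hvi
      have hw : ∀ j ∈ G.neighborFinset v, q ^ max (G.dist v v) (G.dist v j) = q := by
        intro j hj
        have hadj : G.Adj v j := (SimpleGraph.mem_neighborFinset _ _ _).mp hj
        rw [SimpleGraph.dist_self, SimpleGraph.dist_eq_one_iff_adj.mpr hadj]
        simp
      have hwS : ∑ j ∈ S, q ^ max (G.dist v v) (G.dist v j) = S.card * q := by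
        rw [Finset.sum_congr rfl (fun j hj => hw j (Finset.mem_of_mem_filter j hj)),
          Finset.sum_const, nsmul_eq_mul]
      have hwSc : ∑ j ∈ Sc, q ^ max (G.dist v v) (G.dist v j) = Sc.card * q := by
        rw [Finset.sum_congr rfl (fun j hj => hw j (Finset.mem_of_mem_filter j hj)),
          Finset.sum_const, nsmul_eq_mul]
      rw [hwS, hwSc, if_pos rfl, if_pos hos]
      have hc : (S.card : ℝ) + 1 ≤ (Sc.card : ℝ) := by exact_mod_cast hlt
      nlinarith
    · rw [if_neg hvi, add_zero]
      set r := G.dist i v with hrdef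
      have hub : ∑ j ∈ S, q ^ max (G.dist i v) (G.dist i j) ≤ (S.card : ℝ) * q ^ r := by
        refine le_trans (Finset.sum_le_card_nsmul S _ (q ^ r) ?_) ?_
        · intro j _
          exact pow_le_pow_of_le_one hq0.le hq1.le (le_max_left _ _)
        · simp [nsmul_eq_mul]
      have hlb : (Sc.card : ℝ) * q ^ (r + 1) ≤ ∑ j ∈ Sc, q ^ max (G.dist i v) (G.dist i j) := by
        refine le_trans ?_ (Finset.card_nsmul_le_sum Sc _ (q ^ (r+1)) ?_)
        · simp [nsmul_eq_mul]
        · intro j hj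
          have hadj : G.Adj v j := (SimpleGraph.mem_neighborFinset _ _ _).mp
            (Finset.mem_of_mem_filter j hj)
          apply pow_le_pow_of_le_one hq0.le hq1.le
          apply max_le
          · exact Nat.le_succ_of_le (le_refl r)
          · calc G.dist i j ≤ G.dist i v + G.dist v j := hconn.dist_triangle
              _ = r + 1 := by rw [← hrdef, SimpleGraph.dist_eq_one_iff_adj.mpr hadj]
      refine le_trans hub (le_trans ?_ hlb)
      have hd1 : (0:ℝ) < (d:ℝ) + 1 := by linarith
      have hkey : (S.card : ℝ) ≤ ((S.card : ℝ) + 1) * q := by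
        rw [hqdef, mul_div_assoc', le_div_iff₀ hd1]
        have h2 : (2 * S.card + 1 : ℝ) ≤ (d : ℝ) := by exact_mod_cast hSd
        nlinarith
      have hc1 : ((S.card : ℝ) + 1) ≤ (Sc.card : ℝ) := by exact_mod_cast hlt
      have hqr : (0:ℝ) < q ^ r := pow_pos hq0 r
      calc (S.card : ℝ) * q ^ r ≤ ((S.card : ℝ) + 1) * q * q ^ r :=
            mul_le_mul_of_nonneg_right hkey hqr.le
        _ ≤ (Sc.card : ℝ) * q * q ^ r :=
            mul_le_mul_of_nonneg_right (mul_le_mul_of_nonneg_right hc1 hq0.le) hqr.le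
        _ = (Sc.card : ℝ) * q ^ (r + 1) := by ring



theorem stmt_8 {V : Type*} (G : SimpleGraph V) [∀ v : V, Fintype (G.neighborSet v)]
    (hconn : G.Connected)
    (d : ℕ) (hd : 3 ≤ d)
    (hodd : ∀ v, Odd (G.degree v)) (hdeg : ∀ v, G.degree v ≤ d)
    (i : V) (M : ℝ)
    (hM : HasSum (fun r : ℕ =>
      (((d : ℝ) - 1) / ((d : ℝ) + 1)) ^ r * ({j | G.dist i j = r}.ncard : ℝ)) M)
    (A : ℕ → V → ℤ) (hA0 : ∀ v, A 0 v = 1 ∨ A 0 v = -1)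
    (hdyn : ∀ t v, A (t + 1) v =
      if 0 < ∑ j ∈ G.neighborFinset v, A t j then 1 else -1) :
    {t : ℕ | A (t + 2) i ≠ A t i}.Finite ∧
    ({t : ℕ | A (t + 2) i ≠ A t i}.ncard : ℝ) ≤
      (((d : ℝ) + 1) / ((d : ℝ) - 1)) * d * M := by
  classical
  have hd3 : (3:ℝ) ≤ (d:ℝ) := by exact_mod_cast hd
  set q : ℝ := ((d:ℝ)-1)/((d:ℝ)+1) with hqdef
  have hq0 : 0 < q := by apply div_pos <;> linarith
  have hq1 : q < 1 := by rw [hqdef, div_lt_one] <;> linarith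
  have hA : ∀ t v, A t v = 1 ∨ A t v = -1 := by
    intro t v
    cases t with
    | zero => exact hA0 v
    | succ t =>
      rw [hdyn t v]
      split
      · exact Or.inl rfl
      · exact Or.inr rfl
  have hsphfin : ∀ n : ℕ, {j | G.dist i j = n}.Finite := fun n =>
    (aux_ball_finite G hconn i n).subset (fun j hj => le_of_eq hj)
  have hMsum : HasSum (fun v : V => q ^ G.dist i v) M :=
    aux_hasSum_vertex G i hsphfin q hq0.le M hM
  have hind : ∀ (c : Prop) (inst : Decidable c),
      0 ≤ (if c then (1:ℝ) else 0) ∧ (if c then (1:ℝ) else 0) ≤ 1 := by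
    intro c inst; split <;> norm_num
  -- the sigma type of directed edges
  set w : V → V → ℝ := fun u x => q ^ max (G.dist i u) (G.dist i x) with hwdef
  set f : ℕ → (Σ v : V, ↥(G.neighborSet v)) → ℝ :=
    fun t p => w p.1 ↑p.2 * (if A (t+1) ↑p.2 ≠ A t p.1 then (1:ℝ) else 0) with hfdef
  set B : (Σ v : V, ↥(G.neighborSet v)) → ℝ := fun p => q ^ G.dist i p.1 with hBdef
  have hw0 : ∀ u x, 0 ≤ w u x := fun u x => (pow_pos hq0 _).le
  have hwB : ∀ (p : Σ v : V, ↥(G.neighborSet v)), w p.1 ↑p.2 ≤ B p :=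
    fun p => pow_le_pow_of_le_one hq0.le hq1.le (le_max_left _ _)
  have hf0 : ∀ t p, 0 ≤ f t p := fun t p =>
    mul_nonneg (hw0 _ _) (hind _ _).1
  have hfB : ∀ t p, f t p ≤ B p := by
    intro t p
    calc f t p ≤ w p.1 ↑p.2 * 1 := mul_le_mul_of_nonneg_left (hind _ _).2 (hw0 _ _)
      _ = w p.1 ↑p.2 := mul_one _
      _ ≤ B p := hwB p
  -- summability of the dominating function
  have hconv : ∀ (F : V → ℝ) (v : V),
      ∑ (j : ↥(G.neighborSet v)), F ↑j = ∑ j ∈ G.neighborFinset v, F j := by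
    intro F v
    rw [SimpleGraph.neighborFinset_def]
    exact Finset.sum_set_coe (s := G.neighborSet v) (f := F)
  have hdegcard : ∀ v : V, (Fintype.card ↥(G.neighborSet v)) = G.degree v := by
    intro v
    rw [← SimpleGraph.card_neighborFinset_eq_degree, SimpleGraph.neighborFinset_def,
      Set.toFinset_card]
  have hBfiber : ∀ v : V, ∑' (j : ↥(G.neighborSet v)), B ⟨v, j⟩
      = (G.degree v : ℝ) * q ^ G.dist i v := by
    intro v
    rw [tsum_fintype]
    show ∑ _j : ↥(G.neighborSet v), q ^ G.dist i v = _
    rw [Finset.sum_const, Finset.card_univ, nsmul_eq_mul, hdegcard]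
  have hBsum : Summable B := by
    apply (summable_sigma_of_nonneg (fun p => (pow_pos hq0 _).le)).mpr
    refine ⟨fun v => (hasSum_fintype _).summable, ?_⟩
    apply Summable.of_nonneg_of_le
      (fun v => by rw [hBfiber]; positivity)
      (fun v => ?_) ((hMsum.summable).mul_left (d:ℝ))
    rw [hBfiber]
    apply mul_le_mul_of_nonneg_right _ (pow_nonneg hq0.le _)
    exact_mod_cast hdeg v
  have hfsum : ∀ t, Summable (f t) := fun t =>
    Summable.of_nonneg_of_le (hf0 t) (hfB t) hBsum
  set E : ℕ → ℝ := fun t => ∑' p, f t p with hEdef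
  have hEnonneg : ∀ t, 0 ≤ E t := fun t => tsum_nonneg (hf0 t)
  -- per-vertex finite sums
  set sumH : ℕ → V → ℝ := fun t v => ∑ j ∈ G.neighborFinset v,
    w v j * (if A (t+1) j ≠ A t v then (1:ℝ) else 0) with hsumHdef
  set sumG : ℕ → V → ℝ := fun t v => ∑ j ∈ G.neighborFinset v,
    w v j * (if A (t+2) v ≠ A (t+1) j then (1:ℝ) else 0) with hsumGdef
  have hfib_f : ∀ t (v : V), ∑' (j : ↥(G.neighborSet v)), f t ⟨v, j⟩ = sumH t v := by
    intro t v
    rw [tsum_fintype]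
    exact hconv (fun x => w v x * (if A (t+1) x ≠ A t v then (1:ℝ) else 0)) v
  have hsumHsummable : ∀ t, Summable (sumH t) := by
    intro t
    apply ((hfsum t).sigma).congr
    intro v
    exact hfib_f t v
  have hEgroup : ∀ t, E t = ∑' v : V, sumH t v := by
    intro t
    calc E t = ∑' (v : V) (j : ↥(G.neighborSet v)), f t ⟨v, j⟩ :=
          Summable.tsum_sigma' (fun v => (hasSum_fintype _).summable) (hfsum t)
      _ = ∑' v : V, sumH t v := tsum_congr (hfib_f t)
  -- swap equivalence
  set e : (Σ v : V, ↥(G.neighborSet v)) ≃ (Σ v : V, ↥(G.neighborSet v)) :=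
    { toFun := fun p => ⟨(p.2 : V), ⟨p.1, ((G.mem_neighborSet _ _).mp p.2.2).symm⟩⟩
      invFun := fun p => ⟨(p.2 : V), ⟨p.1, ((G.mem_neighborSet _ _).mp p.2.2).symm⟩⟩
      left_inv := by rintro ⟨v, j, h⟩; rfl
      right_inv := by rintro ⟨v, j, h⟩; rfl } with hedef
  have hswap : ∀ t (p : Σ v : V, ↥(G.neighborSet v)),
      f (t+1) (e p) = w p.1 ↑p.2 * (if A (t+2) p.1 ≠ A (t+1) ↑p.2 then (1:ℝ) else 0) := by
    rintro t ⟨v, j, hj⟩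
    show w (↑(⟨j, hj⟩ : ↥(G.neighborSet v))) v
        * (if A (t+1+1) v ≠ A (t+1) ↑(⟨j, hj⟩ : ↥(G.neighborSet v)) then (1:ℝ) else 0) = _
    rw [hwdef]
    simp only []
    rw [max_comm]
  have hfib_g : ∀ t (v : V), ∑' (j : ↥(G.neighborSet v)), f (t+1) (e ⟨v, j⟩) = sumG t v := by
    intro t v
    rw [tsum_fintype]
    rw [Finset.sum_congr rfl (fun j _ => hswap t ⟨v, j⟩)]
    exact hconv (fun x => w v x * (if A (t+2) v ≠ A (t+1) x then (1:ℝ) else 0)) v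
  have hsummable2 : ∀ t, Summable (fun p => f (t+1) (e p)) := fun t =>
    (e.summable_iff (f := f (t+1))).mpr (hfsum (t+1))
  have hEswap : ∀ t, E (t+1) = ∑' v : V, sumG t v := by
    intro t
    calc E (t+1) = ∑' p, f (t+1) (e p) := (e.tsum_eq (f (t+1))).symm
      _ = ∑' (v : V) (j : ↥(G.neighborSet v)), f (t+1) (e ⟨v, j⟩) :=
          Summable.tsum_sigma' (fun v => (hasSum_fintype _).summable) (hsummable2 t)
      _ = ∑' v : V, sumG t v := tsum_congr (hfib_g t)
  have hsumGsummable : ∀ t, Summable (sumG t) := fun t =>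
    ((hsummable2 t).sigma).congr (hfib_g t)
  -- the one-step energy decrease
  set χ : ℕ → ℝ := fun t => if A (t+2) i ≠ A t i then (1:ℝ) else 0 with hχdef
  have hstep : ∀ t, E (t+1) + q * χ t ≤ E t := by
    intro t
    rw [hEswap t, hEgroup t]
    have hone : HasSum (fun v : V => if v = i then q * χ t else 0) (q * χ t) :=
      hasSum_ite_eq i (q * χ t)
    rw [← hone.tsum_eq, ← Summable.tsum_add (hsumGsummable t) hone.summable]
    apply Summable.tsum_le_tsum _ ((hsumGsummable t).add hone.summable) (hsumHsummable t)
    intro v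
    exact aux_fiber G hconn d hd hodd hdeg i A hA hdyn t v
  -- initial energy bound
  have hE0 : E 0 ≤ (d:ℝ) * M := by
    have h1 : E 0 ≤ ∑' p, B p := Summable.tsum_le_tsum (fun p => hfB 0 p) (hfsum 0) hBsum
    have h2 : ∑' p, B p ≤ (d:ℝ) * M := by
      rw [Summable.tsum_sigma' (fun v => (hasSum_fintype _).summable) hBsum]
      have hBs : Summable (fun v : V => ∑' (j : ↥(G.neighborSet v)), B ⟨v, j⟩) :=
        hBsum.sigma
      calc ∑' v : V, ∑' (j : ↥(G.neighborSet v)), B ⟨v, j⟩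
          ≤ ∑' v : V, (d:ℝ) * q ^ G.dist i v := by
            apply Summable.tsum_le_tsum _ hBs ((hMsum.summable).mul_left (d:ℝ))
            intro v
            rw [hBfiber]
            apply mul_le_mul_of_nonneg_right _ (pow_nonneg hq0.le _)
            exact_mod_cast hdeg v
        _ = (d:ℝ) * M := (hMsum.mul_left (d:ℝ)).tsum_eq
    linarith
  -- telescoping
  have htel : ∀ N, E N + ∑ t ∈ Finset.range N, q * χ t ≤ E 0 := by
    intro N
    induction N with
    | zero => simp
    | succ N ih =>
      rw [Finset.sum_range_succ]
      have := hstep N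
      linarith
  have hbound : ∀ N, ∑ t ∈ Finset.range N, q * χ t ≤ (d:ℝ) * M := by
    intro N
    have h1 := htel N
    have h2 := hEnonneg N
    linarith
  -- finite subsets of the flip set are bounded
  have hsubset : ∀ s : Finset ℕ, (↑s ⊆ {t : ℕ | A (t + 2) i ≠ A t i}) →
      (s.card : ℝ) * q ≤ (d:ℝ) * M := by
    intro s hsT
    have hss : s ⊆ Finset.range (s.sup id + 1) := by
      intro t ht
      exact Finset.mem_range.mpr (Nat.lt_succ_of_le (Finset.le_sup (f := id) ht))
    calc (s.card : ℝ) * q = ∑ _t ∈ s, q := by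
          rw [Finset.sum_const, nsmul_eq_mul]
      _ = ∑ t ∈ s, q * χ t := by
          apply Finset.sum_congr rfl
          intro t ht
          have hχ1 : χ t = 1 := if_pos (hsT (Finset.mem_coe.mpr ht))
          rw [hχ1, mul_one]
      _ ≤ ∑ t ∈ Finset.range (s.sup id + 1), q * χ t := by
          apply Finset.sum_le_sum_of_subset_of_nonneg hss
          intro t _ _
          exact mul_nonneg hq0.le (hind _ _).1
      _ ≤ (d:ℝ) * M := hbound _
  have hTfin : {t : ℕ | A (t + 2) i ≠ A t i}.Finite := by
    by_contra hinf
    obtain ⟨u, huT, hufin, hucard⟩ :=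
      Set.Infinite.exists_subset_ncard_eq hinf (Nat.floor ((d:ℝ) * M / q) + 1)
    have hb := hsubset hufin.toFinset (by
      intro t ht
      exact huT ((Set.Finite.mem_toFinset hufin).mp ht))
    rw [← Set.ncard_eq_toFinset_card u hufin, hucard] at hb
    have hfl : (d:ℝ) * M / q < (Nat.floor ((d:ℝ) * M / q) + 1 : ℝ) :=
      Nat.lt_floor_add_one _
    rw [div_lt_iff₀ hq0] at hfl
    push_cast at hb
    linarith
  refine ⟨hTfin, ?_⟩
  have hc : ({t : ℕ | A (t + 2) i ≠ A t i}.ncard : ℝ) * q ≤ (d:ℝ) * M := by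
    have hb := hsubset hTfin.toFinset (by
      intro t ht
      exact (Set.Finite.mem_toFinset hTfin).mp ht)
    rwa [← Set.ncard_eq_toFinset_card _ hTfin] at hb
  have heq : ((d:ℝ)+1)/((d:ℝ)-1) * d * M = (d:ℝ) * M / q := by
    rw [hqdef]
    field_simp
  rw [heq, le_div_iff₀ hq0]
  exact hc
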